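/- Assume Goldbach's conjecture: every even integer greater than 2 is the sum of two primes. If f : ℕ → ℂ is multiplicative with f(0)=0 and satisfies f(p+q)+f(p−q)=2f(p)+2f(q) for all primes p ≥ q, then f(n)=n² for all n ∈ ℕ. -/

import Mathlib

open Classical in
/-- Auxiliary measure for the strong induction in `stmt_13`. -/
noncomputable def nuAux (n : ℕ) : ℕ :=
  if Odd n ∧ IsPrimePow n ∧ ¬ n.Prime then 2 * n + 1 else n

lemma nuAux_le (n : ℕ) : n ≤ nuAux n := by
  unfold nuAux; split_ifs <;> omega

lemma nuAux_le' (n : ℕ) : nuAux n ≤ 2 * n + 1 := by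
  unfold nuAux; split_ifs <;> omega

lemma nuAux_of_not {n : ℕ} (h : ¬ (Odd n ∧ IsPrimePow n ∧ ¬ n.Prime)) : nuAux n = n := by
  unfold nuAux; rw [if_neg h]

lemma nuAux_of_prime {n : ℕ} (h : n.Prime) : nuAux n = n :=
  nuAux_of_not (by tauto)

lemma nuAux_of_even {n : ℕ} (h : Even n) : nuAux n = n :=
  nuAux_of_not (by rintro ⟨h1, -, -⟩; exact (Nat.not_even_iff_odd.mpr h1) h)

lemma nuAux_of_pp {n : ℕ} (h1 : Odd n) (h2 : IsPrimePow n) (h3 : ¬ n.Prime) :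
    nuAux n = 2 * n + 1 := by
  unfold nuAux; rw [if_pos ⟨h1, h2, h3⟩]

theorem stmt_13
    (goldbach : ∀ m : ℕ, 2 < m → Even m → ∃ p q : ℕ, Nat.Prime p ∧ Nat.Prime q ∧ m = p + q)
    (f : ℕ → ℂ) (hf0 : f 0 = 0) (hf1 : f 1 = 1)
    (hmul : ∀ m n : ℕ, Nat.Coprime m n → f (m * n) = f m * f n)
    (hpara : ∀ p q : ℕ, Nat.Prime p → Nat.Prime q → q ≤ p →
      f (p + q) + f (p - q) = 2 * f p + 2 * f q) :
    ∀ n : ℕ, 0 < n → f n = (n : ℂ) ^ 2 := by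
  -- base values
  have h33 := hpara 3 3 (by norm_num) (by norm_num) le_rfl
  have hm23 := hmul 2 3 (by norm_num)
  have h32 := hpara 3 2 (by norm_num) (by norm_num) (by norm_num)
  have h55 := hpara 5 5 (by norm_num) (by norm_num) le_rfl
  have hm25 := hmul 2 5 (by norm_num)
  have h52 := hpara 5 2 (by norm_num) (by norm_num) (by norm_num)
  have h77 := hpara 7 7 (by norm_num) (by norm_num) le_rfl
  have hm27 := hmul 2 7 (by norm_num)
  have h22 := hpara 2 2 (by norm_num) (by norm_num) le_rfl
  have hm43 := hmul 4 3 (by norm_num)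
  have h75 := hpara 7 5 (by norm_num) (by norm_num) (by norm_num)
  have h53 := hpara 5 3 (by norm_num) (by norm_num) (by norm_num)
  have h113 := hpara 11 3 (by norm_num) (by norm_num) (by norm_num)
  have hm45 := hmul 4 5 (by norm_num)
  have h137 := hpara 13 7 (by norm_num) (by norm_num) (by norm_num)
  norm_num at h33 hm23 h32 h55 hm25 h52 h77 hm27 h22 hm43 h75 h53 h113 hm45 h137
  rw [hf0] at h33 h55 h77 h22
  rw [hf1] at h32
  have hf2 : f 2 = 4 := by
    by_contra hne
    have hsub : f 2 - 4 ≠ 0 := sub_ne_zero.mpr hne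
    have h3z : f 3 = 0 := by
      have : (f 2 - 4) * f 3 = 0 := by linear_combination h33 - hm23
      exact (mul_eq_zero.mp this).resolve_left hsub
    have h5z : f 5 = 0 := by
      have : (f 2 - 4) * f 5 = 0 := by linear_combination h55 - hm25
      exact (mul_eq_zero.mp this).resolve_left hsub
    have h7z : f 7 = 0 := by
      have : (f 2 - 4) * f 7 = 0 := by linear_combination h77 - hm27
      exact (mul_eq_zero.mp this).resolve_left hsub
    exact one_ne_zero (α := ℂ) (by linear_combination h32 - h52 - 3 * h5z + 3 * h3z + h7z)
  have hf4 : f 4 = 16 := by linear_combination h22 + 4 * hf2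
  rw [hf2] at h32 h52 h75 h53
  rw [hf4] at hm43
  rw [hm43] at h75
  have hf3 : f 3 = 9 := by linear_combination h32 + (1/3 : ℂ) * h52 + (1/6 : ℂ) * h75
  have hf5 : f 5 = 25 := by linear_combination h32 + 2 * hf3
  have hf7 : f 7 = 49 := by linear_combination h52 + 2 * hf5 - hf3
  have hf8 : f 8 = 64 := by linear_combination h53 + 2 * hf5 + 2 * hf3
  have hf14 : f 14 = 196 := by rw [hm27, hf2, hf7]; norm_num
  rw [hf14, hf8, hf3] at h113
  have hf11 : f 11 = 121 := by linear_combination (-1/2 : ℂ) * h113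
  have hf6 : f 6 = 36 := by linear_combination h33 + 4 * hf3
  have hf20 : f 20 = 400 := by rw [hm45, hf4, hf5]; norm_num
  rw [hf20, hf6, hf7] at h137
  have hf13 : f 13 = 169 := by linear_combination (-1/2 : ℂ) * h137
  -- main induction
  have key : ∀ N n : ℕ, nuAux n ≤ N → 0 < n → f n = (n : ℂ) ^ 2 := by
    intro N
    induction N with
    | zero =>
      intro n hn hn0
      have := nuAux_le n
      omega
    | succ N ih =>
      intro n hn hn0
      by_cases hle : nuAux n ≤ N
      · exact ih n hle hn0
      have IH : ∀ m : ℕ, 0 < m → nuAux m < nuAux n → f m = (m : ℂ) ^ 2 := by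
        intro m hm0 hm
        exact ih m (by omega) hm0
      rcases eq_or_lt_of_le (show 1 ≤ n from hn0) with h1 | h1
      · rw [← h1]; simpa using hf1
      by_cases heven : n % 2 = 0
      · -- n even --------------------------------------------------------
        have hnun : nuAux n = n := nuAux_of_even (Nat.even_iff.mpr heven)
        by_cases h2 : n = 2
        · subst h2; rw [hf2]; norm_num
        obtain ⟨p, q, hp, hq, hn⟩ := goldbach n (by omega) (Nat.even_iff.mpr heven)
        have main : ∀ p q : ℕ, Nat.Prime p → Nat.Prime q → q ≤ p → n = p + q →
            f n = (n : ℂ) ^ 2 := by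
          intro p q hp hq hqp hpq
          have hq2 := hq.two_le
          have hp2 := hp.two_le
          rcases eq_or_lt_of_le hqp with heq | hlt
          · -- p = q
            have H := hpara q q hq hq le_rfl
            rw [Nat.sub_self, hf0] at H
            have fp : f q = (q : ℂ) ^ 2 := IH q (by omega) (by rw [nuAux_of_prime hq]; omega)
            rw [fp] at H
            rw [hpq, ← heq]
            push_cast
            linear_combination H
          · -- q < p : both must be odd
            have hqo : q % 2 = 1 := by
              rcases hq.eq_two_or_odd with h | h
              · subst h
                rcases hp.eq_two_or_odd with h' | h' <;> omega
              · exact h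
            have hpo : p % 2 = 1 := by
              rcases hp.eq_two_or_odd with h | h <;> omega
            have fp : f p = (p : ℂ) ^ 2 := IH p (by omega) (by rw [nuAux_of_prime hp]; omega)
            have fq : f q = (q : ℂ) ^ 2 := IH q (by omega) (by rw [nuAux_of_prime hq]; omega)
            have fd : f (p - q) = ((p - q : ℕ) : ℂ) ^ 2 := by
              refine IH (p - q) (by omega) ?_
              rw [nuAux_of_even (Nat.even_iff.mpr (by omega))]
              omega
            have H := hpara p q hp hq hqp
            rw [fp, fq, fd] at H
            subst hpq
            push_cast [Nat.cast_sub hqp] at H ⊢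
            linear_combination H
        rcases le_total q p with hle2 | hle2
        · exact main p q hp hq hle2 hn
        · exact main q p hq hp hle2 (by omega)
      · -- n odd ---------------------------------------------------------
        have hodd : n % 2 = 1 := by omega
        by_cases hpn : n.Prime
        · -- n an odd prime
          have hnun : nuAux n = n := nuAux_of_prime hpn
          by_cases hsmall : n < 17
          · interval_cases n <;>
              first
                | (norm_num at hpn; done)
                | (norm_num [hf2, hf3, hf5, hf7, hf11, hf13]; done)
          · -- general odd prime ≥ 17
            push_neg at hsmall
            have hsel : ∃ q : ℕ, q.Prime ∧ q % 2 = 1 ∧ q + 4 ≤ n ∧ q ≤ 13 ∧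
                (n + q) % 4 = 0 ∧ ∀ b : ℕ, n + q ≠ 2 ^ b := by
              have h4 : n % 4 = 1 ∨ n % 4 = 3 := by omega
              have twopow : ∀ b c d e : ℕ, d < e → e ≤ d + 16 → 20 ≤ d →
                  d = 2 ^ b → e ≠ 2 ^ c := by
                intro b c d e hde hee hd hdb hec
                have hb5 : 5 ≤ b := by
                  by_contra hlt
                  have : 2 ^ b ≤ 2 ^ 4 := Nat.pow_le_pow_right (by norm_num) (by omega)
                  omega
                have h32b : 32 ≤ 2 ^ b := by
                  calc (32 : ℕ) = 2 ^ 5 := by norm_num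
                  _ ≤ 2 ^ b := Nat.pow_le_pow_right (by norm_num) hb5
                have hbc : b < c := by
                  have : (2 : ℕ) ^ b < 2 ^ c := by omega
                  exact (Nat.pow_lt_pow_iff_right (by norm_num)).mp this
                have : (2 : ℕ) ^ (b + 1) ≤ 2 ^ c := Nat.pow_le_pow_right (by norm_num) (by omega)
                have hps : (2 : ℕ) ^ (b + 1) = 2 * 2 ^ b := by rw [pow_succ]; ring
                omega
              rcases h4 with h | h
              · by_cases hpow : ∀ b : ℕ, n + 3 ≠ 2 ^ b
                · exact ⟨3, by norm_num, by norm_num, by omega, by norm_num, by omega, hpow⟩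
                · push_neg at hpow
                  obtain ⟨b, hb⟩ := hpow
                  refine ⟨7, by norm_num, by norm_num, by omega, by norm_num, by omega, ?_⟩
                  intro c
                  exact twopow b c (n + 3) (n + 7) (by omega) (by omega) (by omega) hb
              · by_cases hpow : ∀ b : ℕ, n + 5 ≠ 2 ^ b
                · exact ⟨5, by norm_num, by norm_num, by omega, by norm_num, by omega, hpow⟩
                · push_neg at hpow
                  obtain ⟨b, hb⟩ := hpow
                  refine ⟨13, by norm_num, by norm_num, by omega, by norm_num, by omega, ?_⟩
                  intro c
                  exact twopow b c (n + 5) (n + 13) (by omega) (by omega) (by omega) hb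
            obtain ⟨q, hq, hqo, hq4, hq13, hmod4, hnotpow⟩ := hsel
            have hm0 : n + q ≠ 0 := by omega
            obtain ⟨a, t, hmt, htodd, ha2⟩ :
                ∃ a t : ℕ, 2 ^ a * t = n + q ∧ ¬ (2 ∣ t) ∧ 2 ≤ a := by
              refine ⟨(n + q).factorization 2, (n + q) / 2 ^ ((n + q).factorization 2),
                Nat.ordProj_mul_ordCompl_eq_self (n + q) 2,
                Nat.not_dvd_ordCompl Nat.prime_two hm0, ?_⟩
              have hdvd : (2 : ℕ) ^ 2 ∣ n + q := by
                have : (4 : ℕ) ∣ n + q := Nat.dvd_of_mod_eq_zero hmod4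
                simpa using this
              exact (Nat.Prime.pow_dvd_iff_le_factorization Nat.prime_two hm0).mp hdvd
            have ht2 : t % 2 = 1 := by omega
            have ht0 : t ≠ 0 := by
              rintro rfl
              rw [mul_zero] at hmt
              exact hm0 hmt.symm
            have ht1 : t ≠ 1 := by
              intro h1
              rw [h1, mul_one] at hmt
              exact hnotpow a hmt.symm
            have ht3 : 3 ≤ t := by omega
            have copt : Nat.Coprime (2 ^ a) t :=
              Nat.Coprime.pow_left _
                ((Nat.Prime.coprime_iff_not_dvd Nat.prime_two).mpr htodd)
            have heven2a : Even ((2 : ℕ) ^ a) := (Nat.even_pow).mpr ⟨even_two, by omega⟩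
            have hc : ((2 : ℂ)) ^ a * (t : ℂ) = (n : ℂ) + (q : ℂ) := by
              have : ((2 ^ a * t : ℕ) : ℂ) = ((n + q : ℕ) : ℂ) := by rw [hmt]
              push_cast at this
              exact this
            have hqn : q ≤ n := by omega
            have H := hpara n q hpn hq hqn
            rw [show n + q = 2 ^ a * t from hmt.symm, hmul _ _ copt] at H
            have h4t : 4 * t ≤ n + q := by
              calc 4 * t = 2 ^ 2 * t := by norm_num
              _ ≤ 2 ^ a * t := Nat.mul_le_mul (Nat.pow_le_pow_right (by norm_num) ha2) le_rfl
              _ = n + q := hmt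
            have h3e : 2 ^ a * 3 ≤ n + q := hmt ▸ Nat.mul_le_mul le_rfl ht3
            have hp2a : 0 < 2 ^ a := Nat.pow_pos (n := a) (by norm_num)
            have nu2a : nuAux (2 ^ a) = 2 ^ a := nuAux_of_even heven2a
            have ft : f t = (t : ℂ) ^ 2 := by
              refine IH t (by omega) ?_
              have := nuAux_le' t
              omega
            have f2a : f (2 ^ a) = ((2 ^ a : ℕ) : ℂ) ^ 2 := by
              refine IH (2 ^ a) hp2a ?_
              omega
            have fq : f q = (q : ℂ) ^ 2 := by
              refine IH q (by omega) ?_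
              rw [nuAux_of_prime hq]
              omega
            have fd : f (n - q) = ((n - q : ℕ) : ℂ) ^ 2 := by
              refine IH (n - q) (by omega) ?_
              rw [nuAux_of_even (Nat.even_iff.mpr (by omega))]
              omega
            rw [f2a, ft, fq, fd] at H
            push_cast [Nat.cast_sub hqn] at H ⊢
            linear_combination (-(1/2) : ℂ) * H +
              ((1/2 : ℂ) * ((2 : ℂ) ^ a * (t : ℂ) + (n : ℂ) + (q : ℂ))) * hc
        · -- n odd composite
          by_cases hpp : IsPrimePow n
          · -- odd prime power, not prime
            have hnun : nuAux n = 2 * n + 1 :=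
              nuAux_of_pp (Nat.odd_iff.mpr hodd) hpp hpn
            have cop : Nat.Coprime 2 n :=
              (Nat.Prime.coprime_iff_not_dvd Nat.prime_two).mpr (by omega)
            have h2n : f (2 * n) = ((2 * n : ℕ) : ℂ) ^ 2 := by
              refine IH (2 * n) (by omega) ?_
              rw [nuAux_of_even ⟨n, by ring⟩]
              omega
            rw [hmul 2 n cop, hf2] at h2n
            push_cast at h2n
            linear_combination (1/4 : ℂ) * h2n
          · -- at least two prime factors
            have hn1 : n ≠ 1 := by omega
            have hn0 : n ≠ 0 := by omega
            have hp := Nat.minFac_prime hn1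
            set p := n.minFac with hpdef
            set A := p ^ n.factorization p with hA
            set B := n / p ^ n.factorization p with hB
            have hab : A * B = n := Nat.ordProj_mul_ordCompl_eq_self n p
            have copAB : Nat.Coprime A B :=
              Nat.Coprime.pow_left _ (Nat.coprime_ordCompl hp hn0)
            have hk : 0 < n.factorization p :=
              hp.factorization_pos_of_dvd hn0 (Nat.minFac_dvd n)
            have hA1 : 1 < A := Nat.one_lt_pow (by omega) hp.two_le
            have hB1 : 1 < B := by
              rcases Nat.lt_or_ge B 2 with hb | hb
              · exfalso
                interval_cases B
                · omega
                · rw [mul_one] at hab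
                  exact hpp ⟨p, n.factorization p, hp.prime, hk, by rw [← hA, hab]⟩
              · omega
            have hoAB : Odd (A * B) := hab ▸ Nat.odd_iff.mpr hodd
            have hAodd : A % 2 = 1 := Nat.odd_iff.mp (Nat.odd_mul.mp hoAB).1
            have hBodd : B % 2 = 1 := Nat.odd_iff.mp (Nat.odd_mul.mp hoAB).2
            have hA3 : 3 ≤ A := by omega
            have hB3 : 3 ≤ B := by omega
            have hAn : A * 3 ≤ n := hab ▸ Nat.mul_le_mul le_rfl hB3
            have hBn : 3 * B ≤ n := hab ▸ Nat.mul_le_mul hA3 le_rfl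
            have hnun : nuAux n = n := nuAux_of_not (fun ⟨_, hppn, _⟩ => hpp hppn)
            have fA : f A = (A : ℂ) ^ 2 := by
              refine IH A (by omega) ?_
              have := nuAux_le' A
              omega
            have fB : f B = (B : ℂ) ^ 2 := by
              refine IH B (by omega) ?_
              have := nuAux_le' B
              omega
            rw [show n = A * B from hab.symm, hmul A B copAB, fA, fB]
            push_cast
            ring
  intro n hn
  exact key (nuAux n) n le_rfl hn
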